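/- Let L be a Lie algebra over ℚ, let ∂ : L → L be a derivation of L (additive with ∂[x, y] = [∂x, y] + [x, ∂y]), and let (X_n)_{n ∈ ℕ} be a sequence in L satisfying ∂X_n = X_{n+1} for all n and the two-step nilpotency condition [[X_m, X_n], X_k] = 0 for all m, n, k. Define the additive operator D : L → L by D(w) = −∂w − [X_0, w]. Then for every m ≥ 1 the identity Σ_{k=0}^{m} binom(m, k) D^{m−k} X_{m+k−1} = 0 holds in L. -/

import Mathlib

open Finset

private lemma choose_helper (m k j : ℕ) (hk : k ≤ m) :
    m.choose k * (m - k).choose j = m.choose j * (m - j).choose k := by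
  rcases le_or_gt j (m - k) with h | h
  · have h1 : m - k ≤ m := Nat.sub_le m k
    have h2 := Nat.choose_mul (n := m) (k := m - k) (s := j) h
    rw [Nat.choose_symm hk] at h2
    have h3 : m - k - j = m - j - k := by omega
    have h4 : k ≤ m - j := by omega
    rw [h3] at h2
    have h5 : (m - j) - (m - j - k) = k := by omega
    have h6 : (m - j).choose (m - j - k) = (m - j).choose k := by
      rw [← h5]; exact Nat.choose_symm (by omega)
    rw [h6] at h2
    exact h2
  · rcases le_or_gt j m with hjm | hjm
    · rw [Nat.choose_eq_zero_of_lt h, Nat.choose_eq_zero_of_lt (show m - j < k by omega)]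
      ring
    · rw [Nat.choose_eq_zero_of_lt h, Nat.choose_eq_zero_of_lt hjm]
      ring

private lemma iterate_formula
    (L : Type*) [LieRing L]
    (del : L → L)
    (hdel_add : ∀ x y : L, del (x + y) = del x + del y)
    (hdel_br : ∀ x y : L, del ⁅x, y⁆ = ⁅del x, y⁆ + ⁅x, del y⁆)
    (X : ℕ → L) (hX : ∀ n : ℕ, del (X n) = X (n + 1))
    (hnil : ∀ m n k : ℕ, ⁅⁅X m, X n⁆, X k⁆ = 0)
    (j n : ℕ) :
    (fun w => -del w - ⁅X 0, w⁆)^[j] (X n)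
      = (-1 : ℤ)^j • (X (n + j)
          + ∑ a ∈ Finset.range j, ((j.choose (a+1)) : ℤ) • ⁅X a, X (n + j - (a+1))⁆) := by
  set Dh : L →+ L := AddMonoidHom.mk' (fun w => -del w - ⁅X 0, w⁆) (by
    intro a b
    simp only [hdel_add, lie_add]
    abel) with hDh
  have hD : (fun w => -del w - ⁅X 0, w⁆) = ⇑Dh := rfl
  induction j with
  | zero => simp
  | succ j ih =>
    rw [Function.iterate_succ_apply', ih]
    have hDv : ∀ v : L, -del v - ⁅X 0, v⁆ = Dh v := fun _ => rfl
    rw [hDv, map_zsmul, map_add, map_sum]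
    simp only [map_zsmul]
    have hXterm : Dh (X (n + j)) = -X (n + j + 1) - ⁅X 0, X (n + j)⁆ := by
      show -del (X (n + j)) - ⁅X 0, X (n + j)⁆ = _
      rw [hX]
    have hbr : ∀ a b : ℕ, Dh ⁅X a, X b⁆ = -⁅X (a+1), X b⁆ - ⁅X a, X (b+1)⁆ := by
      intro a b
      show -del ⁅X a, X b⁆ - ⁅X 0, ⁅X a, X b⁆⁆ = _
      rw [hdel_br, hX, hX]
      have h0 : ⁅X 0, ⁅X a, X b⁆⁆ = 0 := by rw [← lie_skew, hnil, neg_zero]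
      rw [h0]
      abel
    rw [hXterm]
    have hsum : ∀ a ∈ Finset.range j,
        ((j.choose (a+1)) : ℤ) • Dh ⁅X a, X (n + j - (a+1))⁆
          = ((j.choose (a+1)) : ℤ) • (-⁅X (a+1), X (n + j - (a+1))⁆ - ⁅X a, X (n + j - a)⁆) := by
      intro a ha
      rw [Finset.mem_range] at ha
      rw [hbr]
      have e : n + j - (a+1) + 1 = n + j - a := by omega
      rw [e]
    rw [Finset.sum_congr rfl hsum]
    -- now pure algebra: pull out (-1)^(j+1)
    have key : -X (n + j + 1) - ⁅X 0, X (n + j)⁆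
        + ∑ a ∈ Finset.range j, ((j.choose (a+1)) : ℤ) •
            (-⁅X (a+1), X (n + j - (a+1))⁆ - ⁅X a, X (n + j - a)⁆)
        = -(X (n + (j+1)) + ∑ a ∈ Finset.range (j+1),
            (((j+1).choose (a+1)) : ℤ) • ⁅X a, X (n + (j+1) - (a+1))⁆) := by
      have hidx : n + j + 1 = n + (j + 1) := by ring
      have e1 : ∀ a, n + (j+1) - (a+1) = n + j - a := by intro a; omega
      -- RHS sum: split with Pascal
      have pascal : ∀ a ∈ Finset.range (j+1),
          (((j+1).choose (a+1)) : ℤ) • ⁅X a, X (n + j - a)⁆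
            = ((j.choose a : ℤ)) • ⁅X a, X (n + j - a)⁆
              + ((j.choose (a+1) : ℤ)) • ⁅X a, X (n + j - a)⁆ := by
        intro a _
        rw [Nat.choose_succ_succ]
        push_cast
        rw [add_smul]
      simp only [e1]
      rw [Finset.sum_congr rfl pascal, Finset.sum_add_distrib]
      have s1 : ∑ a ∈ Finset.range (j+1), ((j.choose a : ℤ)) • ⁅X a, X (n + j - a)⁆
          = ⁅X 0, X (n + j)⁆
            + ∑ a ∈ Finset.range j, ((j.choose (a+1) : ℤ)) • ⁅X (a+1), X (n + j - (a+1))⁆ := by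
        rw [Finset.sum_range_succ']
        simp [add_comm]
      have s2 : ∑ a ∈ Finset.range (j+1), ((j.choose (a+1) : ℤ)) • ⁅X a, X (n + j - a)⁆
          = ∑ a ∈ Finset.range j, ((j.choose (a+1) : ℤ)) • ⁅X a, X (n + j - a)⁆ := by
        rw [Finset.sum_range_succ, Nat.choose_eq_zero_of_lt (by omega)]
        simp
      rw [s1, s2, ← hidx]
      have s3 : ∑ a ∈ Finset.range j, ((j.choose (a+1)) : ℤ) •
            (-⁅X (a+1), X (n + j - (a+1))⁆ - ⁅X a, X (n + j - a)⁆)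
          = -∑ a ∈ Finset.range j, ((j.choose (a+1) : ℤ)) • ⁅X (a+1), X (n + j - (a+1))⁆
            - ∑ a ∈ Finset.range j, ((j.choose (a+1) : ℤ)) • ⁅X a, X (n + j - a)⁆ := by
        rw [← Finset.sum_neg_distrib, ← Finset.sum_sub_distrib]
        apply Finset.sum_congr rfl
        intro a _
        rw [smul_sub, smul_neg]
      rw [s3]
      abel
    rw [key, pow_succ, mul_smul, neg_one_zsmul, smul_neg]


/-- In a Lie algebra `L` over `ℚ` with a derivation `∂`, a sequence `X n` with
`∂ (X n) = X (n+1)` and vanishing double brackets, the operator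
`D w = -∂ w - ⁅X 0, w⁆` satisfies the identities
`∑_{k=0}^{m} C(m,k) • D^[m-k] (X (m+k-1)) = 0` for all `m ≥ 1`. -/
theorem nilpotent_sequence_identity
    (L : Type*) [LieRing L] [LieAlgebra ℚ L]
    (del : L → L)
    (hdel_add : ∀ x y : L, del (x + y) = del x + del y)
    (hdel_br : ∀ x y : L, del ⁅x, y⁆ = ⁅del x, y⁆ + ⁅x, del y⁆)
    (X : ℕ → L) (hX : ∀ n : ℕ, del (X n) = X (n + 1))
    (hnil : ∀ m n k : ℕ, ⁅⁅X m, X n⁆, X k⁆ = 0)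
    (m : ℕ) (hm : 1 ≤ m) :
    ∑ k ∈ Finset.range (m + 1),
      (m.choose k) • (fun w => -del w - ⁅X 0, w⁆)^[m - k] (X (m + k - 1)) = 0 := by
  have key := iterate_formula L del hdel_add hdel_br X hX hnil
  have step1 : ∀ k ∈ Finset.range (m+1),
      (m.choose k) • (fun w => -del w - ⁅X 0, w⁆)^[m-k] (X (m+k-1))
        = ((m.choose k : ℤ) * (-1:ℤ)^(m-k)) • X (2*m-1)
          + ∑ a ∈ Finset.range (m-k),
              ((m.choose k : ℤ) * (-1:ℤ)^(m-k) * ((m-k).choose (a+1) : ℤ))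
                • ⁅X a, X (2*m-2-a)⁆ := by
    intro k hk
    rw [Finset.mem_range] at hk
    rw [key (m-k) (m+k-1)]
    have e1 : m + k - 1 + (m - k) = 2*m - 1 := by omega
    have e2 : ∀ a : ℕ, 2*m - 1 - (a+1) = 2*m - 2 - a := fun a => by omega
    simp only [e1, e2]
    rw [← natCast_zsmul, smul_smul, smul_add, Finset.smul_sum]
    congr 1
    apply Finset.sum_congr rfl
    intro a _
    rw [smul_smul, mul_assoc]
  rw [Finset.sum_congr rfl step1, Finset.sum_add_distrib]
  -- first part
  have h1 : ∑ k ∈ Finset.range (m+1), ((m.choose k : ℤ) * (-1:ℤ)^(m-k)) • X (2*m-1) = 0 := by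
    rw [← Finset.sum_smul]
    have hc : ∑ k ∈ Finset.range (m+1), ((m.choose k : ℤ) * (-1:ℤ)^(m-k)) = 0 := by
      have hterm : ∀ k ∈ Finset.range (m+1),
          ((m.choose k : ℤ) * (-1:ℤ)^(m-k)) = (-1:ℤ)^m * ((-1:ℤ)^k * (m.choose k : ℤ)) := by
        intro k hk
        rw [Finset.mem_range] at hk
        have hp : (-1:ℤ)^(m-k) = (-1:ℤ)^m * (-1:ℤ)^k := by
          have h2 : ((-1:ℤ)^k) * ((-1:ℤ)^k) = 1 := by
            rw [← pow_add, ← two_mul, pow_mul]; norm_num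
          calc (-1:ℤ)^(m-k) = (-1:ℤ)^(m-k) * (((-1:ℤ)^k) * ((-1:ℤ)^k)) := by rw [h2, mul_one]
            _ = ((-1:ℤ)^(m-k) * (-1:ℤ)^k) * (-1:ℤ)^k := by ring
            _ = (-1:ℤ)^m * (-1:ℤ)^k := by rw [← pow_add, show m - k + k = m by omega]
        rw [hp]; ring
      rw [Finset.sum_congr rfl hterm, ← Finset.mul_sum,
        Int.alternating_sum_range_choose_of_ne (by omega), mul_zero]
    rw [hc, zero_smul]
  rw [h1, zero_add]
  -- second part
  have hext : ∀ k ∈ Finset.range (m+1),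
      ∑ a ∈ Finset.range (m-k),
          ((m.choose k : ℤ) * (-1:ℤ)^(m-k) * ((m-k).choose (a+1) : ℤ)) • ⁅X a, X (2*m-2-a)⁆
        = ∑ a ∈ Finset.range m,
          ((m.choose k : ℤ) * (-1:ℤ)^(m-k) * ((m-k).choose (a+1) : ℤ)) • ⁅X a, X (2*m-2-a)⁆ := by
    intro k hk
    rw [Finset.mem_range] at hk
    apply Finset.sum_subset (Finset.range_subset_range.2 (by omega))
    intro a ha hna
    rw [Finset.mem_range] at ha
    rw [Finset.mem_range, not_lt] at hna
    rw [Nat.choose_eq_zero_of_lt (show m - k < a + 1 by omega)]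
    simp
  rw [Finset.sum_congr rfl hext, Finset.sum_comm]
  apply Finset.sum_eq_zero
  intro a ha
  rw [Finset.mem_range] at ha
  rcases eq_or_ne a (m-1) with rfl | hne
  · have e3 : 2*m - 2 - (m-1) = m - 1 := by omega
    rw [e3]
    simp [lie_self]
  · -- a ≤ m - 2, coefficient sum vanishes
    rw [← Finset.sum_smul]
    have hc : ∑ k ∈ Finset.range (m+1),
        ((m.choose k : ℤ) * (-1:ℤ)^(m-k) * ((m-k).choose (a+1) : ℤ)) = 0 := by
      have hterm : ∀ k ∈ Finset.range (m+1),
          ((m.choose k : ℤ) * (-1:ℤ)^(m-k) * ((m-k).choose (a+1) : ℤ))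
            = ((-1:ℤ)^m * (m.choose (a+1) : ℤ)) * ((-1:ℤ)^k * ((m-(a+1)).choose k : ℤ)) := by
        intro k hk
        rw [Finset.mem_range] at hk
        have hch := choose_helper m k (a+1) (by omega)
        have hch' : ((m.choose k : ℤ)) * ((m-k).choose (a+1) : ℤ)
            = ((m.choose (a+1) : ℤ)) * ((m-(a+1)).choose k : ℤ) := by
          exact_mod_cast congrArg (Nat.cast : ℕ → ℤ) hch
        have hp : (-1:ℤ)^(m-k) = (-1:ℤ)^m * (-1:ℤ)^k := by
          have h2 : ((-1:ℤ)^k) * ((-1:ℤ)^k) = 1 := by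
            rw [← pow_add, ← two_mul, pow_mul]; norm_num
          calc (-1:ℤ)^(m-k) = (-1:ℤ)^(m-k) * (((-1:ℤ)^k) * ((-1:ℤ)^k)) := by rw [h2, mul_one]
            _ = ((-1:ℤ)^(m-k) * (-1:ℤ)^k) * (-1:ℤ)^k := by ring
            _ = (-1:ℤ)^m * (-1:ℤ)^k := by rw [← pow_add, show m - k + k = m by omega]
        calc ((m.choose k : ℤ) * (-1:ℤ)^(m-k) * ((m-k).choose (a+1) : ℤ))
            = ((m.choose k : ℤ) * ((m-k).choose (a+1) : ℤ)) * (-1:ℤ)^(m-k) := by ring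
          _ = ((m.choose (a+1) : ℤ)) * ((m-(a+1)).choose k : ℤ) * (-1:ℤ)^(m-k) := by rw [hch']
          _ = _ := by rw [hp]; ring
      rw [Finset.sum_congr rfl hterm, ← Finset.mul_sum]
      have halt : ∑ k ∈ Finset.range (m+1), ((-1:ℤ)^k * ((m-(a+1)).choose k : ℤ)) = 0 := by
        have hsub : ∑ k ∈ Finset.range (m-(a+1)+1), ((-1:ℤ)^k * ((m-(a+1)).choose k : ℤ))
            = ∑ k ∈ Finset.range (m+1), ((-1:ℤ)^k * ((m-(a+1)).choose k : ℤ)) := by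
          apply Finset.sum_subset (Finset.range_subset_range.2 (by omega))
          intro k hk hnk
          rw [Finset.mem_range, not_lt] at hnk
          rw [Nat.choose_eq_zero_of_lt (show m - (a+1) < k by omega)]
          simp
        rw [← hsub, Int.alternating_sum_range_choose_of_ne (by omega)]
      rw [halt, mul_zero]
    rw [hc, zero_smul]
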